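/- Fix a real number $r > 1$ and define $a_n = \lfloor r^{n/2}\rfloor^2 + 1$ if $n = 2\cdot 3^k$ for some $k \ge 1$, and $a_n = \lfloor r^n \rfloor$ otherwise. Then $a_{2\cdot 3^k} - (a_{3^k})^2 = 1$ for every $k \ge 1$, and consequently the sequence $(a_n)$ does not converge to $0$ in any Hausdorff ring topology on $\mathbb{Z}$. -/

import Mathlib

open Filter

theorem stmt6 (r : ℝ) (hr : 1 < r) (a : ℕ → ℤ)
    (ha1 : ∀ k : ℕ, 1 ≤ k → a (2 * 3 ^ k) = ⌊r ^ (3 ^ k : ℕ)⌋ ^ 2 + 1)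
    (ha2 : ∀ n : ℕ, 1 ≤ n → (¬ ∃ k ≥ 1, n = 2 * 3 ^ k) → a n = ⌊r ^ n⌋) :
    (∀ k : ℕ, 1 ≤ k → a (2 * 3 ^ k) - (a (3 ^ k)) ^ 2 = 1) ∧
    ∀ (τ : TopologicalSpace ℤ), @IsTopologicalRing ℤ τ _ → @T2Space ℤ τ →
      ¬ Tendsto a atTop (@nhds ℤ τ 0) := by
  have key : ∀ k : ℕ, 1 ≤ k → a (2 * 3 ^ k) - (a (3 ^ k)) ^ 2 = 1 := by
    intro k hk
    have h3 : a (3 ^ k) = ⌊r ^ (3 ^ k : ℕ)⌋ := by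
      apply ha2
      · exact Nat.one_le_pow _ _ (by norm_num)
      · rintro ⟨j, hj, hEq⟩
        have hodd : Odd (3 ^ k) := Odd.pow ⟨1, by norm_num⟩
        rw [hEq] at hodd
        exact (Nat.not_odd_iff_even.mpr ⟨3 ^ j, by ring⟩) hodd
    rw [ha1 k hk, h3]; ring
  refine ⟨key, ?_⟩
  intro τ hring hT2 h
  letI := τ
  have hsub : Tendsto (fun k : ℕ => (3 : ℕ) ^ k) atTop atTop := by
    apply tendsto_atTop_mono (f := id)
    · intro k
      exact (Nat.lt_pow_self (by norm_num : 1 < 3) : k < 3 ^ k).le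
    · exact tendsto_id
  have hsub2 : Tendsto (fun k : ℕ => 2 * (3 : ℕ) ^ k) atTop atTop := by
    apply tendsto_atTop_mono (f := fun k : ℕ => (3 : ℕ) ^ k)
    · intro k; omega
    · exact hsub
  have h1 : Tendsto (fun k : ℕ => a (2 * 3 ^ k)) atTop (nhds 0) := h.comp hsub2
  have h2 : Tendsto (fun k : ℕ => a (3 ^ k)) atTop (nhds 0) := h.comp hsub
  have h3 : Tendsto (fun k : ℕ => a (2 * 3 ^ k) - (a (3 ^ k)) ^ 2) atTop
      (nhds (0 - 0 ^ 2)) := h1.sub (h2.pow 2)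
  have h4 : Tendsto (fun _ : ℕ => (1 : ℤ)) atTop (nhds (0 - 0 ^ 2)) := by
    apply h3.congr'
    filter_upwards [eventually_ge_atTop 1] with k hk
    exact key k hk
  have h5 : (1 : ℤ) = 0 - 0 ^ 2 := tendsto_nhds_unique tendsto_const_nhds h4
  norm_num at h5
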